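/- Let λ ∈ ℝ, α ∈ ℝ, and n ∈ ℕ with n ≥ 1. Then for every x ∈ ℝ: (d/dx) L^{(α)}_{n,λ}(x) = −Σ_{k=1}^{n} Σ_{l=1}^{k} x^{l−1}·λ^{l−1}·C(k−1, k−l)·L^{(α)}_{n−k,λ}(x), where C denotes the ordinary binomial coefficient. -/

import Mathlib

/-- The degenerate falling factorial `(1)_{m,λ} = ∏_{j=0}^{m-1} (1 - jλ)`. -/
noncomputable def degFall (lam : ℝ) (m : ℕ) : ℝ :=
  ∏ j ∈ Finset.range m, (1 - (j : ℝ) * lam)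

/-- Generalized binomial coefficient `binom(n+α, n−m) = (∏_{j=0}^{n−m−1} (n+α−j))/(n−m)!`. -/
noncomputable def genBinom (α : ℝ) (n m : ℕ) : ℝ :=
  (∏ j ∈ Finset.range (n - m), ((n : ℝ) + α - (j : ℝ))) / (Nat.factorial (n - m) : ℝ)

/-- The degenerate generalized Laguerre polynomial `L^{(α)}_{n,λ}(x)`. -/
noncomputable def degLaguerre (lam α : ℝ) (n : ℕ) (x : ℝ) : ℝ :=
  ∑ m ∈ Finset.range (n + 1),
    genBinom α n m * (-1 : ℝ) ^ m * degFall lam m * x ^ m / (Nat.factorial m : ℝ)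

open Finset

noncomputable def gb (β : ℝ) (r : ℕ) : ℝ :=
  (∏ j ∈ Finset.range r, (β + j + 1)) / (Nat.factorial r : ℝ)

lemma gb_zero (β : ℝ) : gb β 0 = 1 := by simp [gb]

lemma genBinom_eq_gb (α : ℝ) {n m : ℕ} (h : m ≤ n) :
    genBinom α n m = gb (α + m) (n - m) := by
  unfold genBinom gb
  congr 1
  rw [← Finset.prod_range_reflect (fun j => α + (m : ℝ) + (j : ℕ) + 1) (n - m)]
  refine Finset.prod_congr rfl fun j hj => ?_
  rw [Finset.mem_range] at hj
  have h2 : n - m - 1 - j = n - m - (j + 1) := by omega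
  rw [h2, Nat.cast_sub (by omega : j + 1 ≤ n - m), Nat.cast_sub h]
  push_cast
  ring

lemma gb_succ (β : ℝ) (r : ℕ) : gb (β + 1) (r + 1) = gb β (r + 1) + gb (β + 1) r := by
  have h1 : (∏ j ∈ range (r + 1), (β + (j : ℝ) + 1))
      = (β + 1) * ∏ j ∈ range r, (β + 1 + (j : ℝ) + 1) := by
    rw [Finset.prod_range_succ']
    rw [mul_comm]
    congr 1
    · norm_num
    · exact Finset.prod_congr rfl fun j _ => by push_cast; ring
  have h2 : (∏ j ∈ range (r + 1), (β + 1 + (j : ℝ) + 1))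
      = (∏ j ∈ range r, (β + 1 + (j : ℝ) + 1)) * (β + 1 + r + 1) :=
    Finset.prod_range_succ _ _
  unfold gb
  rw [h1, h2, Nat.factorial_succ]
  have hfac : ((r.factorial : ℝ)) ≠ 0 := Nat.cast_ne_zero.mpr r.factorial_ne_zero
  have hr1 : ((r : ℝ) + 1) ≠ 0 := by positivity
  push_cast
  field_simp
  ring

lemma gb_sum (β : ℝ) (M : ℕ) : ∑ u ∈ range (M + 1), gb β u = gb (β + 1) M := by
  induction M with
  | zero => simp [gb]
  | succ M ih => rw [Finset.sum_range_succ, ih, gb_succ]; ring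

lemma gb_sum_rev (β : ℝ) (M : ℕ) :
    ∑ u ∈ range (M + 1), gb β (M - u) = gb (β + 1) M := by
  rw [← gb_sum β M, ← Finset.sum_range_reflect (fun u => gb β u) (M + 1)]
  exact Finset.sum_congr rfl fun j _ => by norm_num

lemma choose_hockey (a : ℕ) : ∀ r, (a + 1 + r).choose r = ∑ s ∈ range (r + 1), (a + s).choose s := by
  intro r
  induction r with
  | zero => simp
  | succ r ih =>
    rw [Finset.sum_range_succ, ← ih]
    have h : a + 1 + (r + 1) = (a + 1 + r) + 1 := rfl
    rw [h, Nat.choose_succ_succ]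
    have h2 : a + 1 + r = a + (r + 1) := by omega
    rw [h2]

lemma gb_vdm : ∀ (a : ℕ) (β : ℝ) (R : ℕ),
    ∑ r ∈ range (R + 1), ((a + r).choose r : ℝ) * gb β (R - r) = gb (β + a + 1) R := by
  intro a
  induction a with
  | zero =>
    intro β R
    simp only [Nat.zero_eq, zero_add, Nat.choose_self, Nat.cast_one, one_mul, Nat.cast_zero,
      add_zero]
    exact gb_sum_rev β R
  | succ a ih =>
    intro β R
    have step1 : ∑ r ∈ range (R + 1), ((a + 1 + r).choose r : ℝ) * gb β (R - r)
        = ∑ r ∈ range (R + 1), ∑ s ∈ range (r + 1), ((a + s).choose s : ℝ) * gb β (R - r) := by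
      refine Finset.sum_congr rfl fun r _ => ?_
      rw [choose_hockey, Nat.cast_sum, Finset.sum_mul]
    have step2 : ∑ r ∈ range (R + 1), ∑ s ∈ range (r + 1), ((a + s).choose s : ℝ) * gb β (R - r)
        = ∑ s ∈ range (R + 1), ∑ r ∈ Finset.Ico s (R + 1), ((a + s).choose s : ℝ) * gb β (R - r) := by
      simp only [Finset.range_eq_Ico]
      rw [← Finset.sum_Ico_Ico_comm 0 (R + 1)
        (fun s r => ((a + s).choose s : ℝ) * gb β (R - r))]
    have step3 : ∀ s ∈ range (R + 1),
        ∑ r ∈ Finset.Ico s (R + 1), ((a + s).choose s : ℝ) * gb β (R - r)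
          = ((a + s).choose s : ℝ) * gb (β + 1) (R - s) := by
      intro s hs
      rw [Finset.mem_range] at hs
      rw [← Finset.mul_sum]
      congr 1
      rw [Finset.sum_Ico_eq_sum_range]
      have hR : R + 1 - s = (R - s) + 1 := by omega
      rw [hR, ← gb_sum_rev β (R - s)]
      exact Finset.sum_congr rfl fun i _ => by congr 1; omega
    rw [step1, step2, Finset.sum_congr rfl step3, ih (β + 1) R]
    congr 1
    push_cast
    ring

lemma dlg_inner_sum (α : ℝ) (n l m : ℕ) (hl : 1 ≤ l) (hlm : l + m ≤ n) :
    ∑ u ∈ range (n - l - m + 1), (((l - 1 + u).choose u : ℝ)) * genBinom α (n - l - u) m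
      = gb (α + m + l) (n - l - m) := by
  have h1 : ∀ u ∈ range (n - l - m + 1),
      ((l - 1 + u).choose u : ℝ) * genBinom α (n - l - u) m
        = ((l - 1 + u).choose u : ℝ) * gb (α + m) (n - l - m - u) := by
    intro u hu
    rw [Finset.mem_range] at hu
    rw [genBinom_eq_gb α (by omega : m ≤ n - l - u),
      (by omega : n - l - u - m = n - l - m - u)]
  rw [Finset.sum_congr rfl h1, gb_vdm (l - 1) (α + m) (n - l - m)]
  congr 1
  rw [Nat.cast_sub hl]
  push_cast
  ring

lemma degFall_succ' (lam : ℝ) (m : ℕ) :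
    degFall lam (m + 1) = degFall lam m * (1 - m * lam) :=
  Finset.prod_range_succ _ _

lemma degFall_sum (lam : ℝ) : ∀ p : ℕ,
    ∑ q ∈ range (p + 1), lam ^ (p - q) * (-1 : ℝ) ^ q * degFall lam q / (q.factorial : ℝ)
      = (-1 : ℝ) ^ p * degFall lam (p + 1) / (p.factorial : ℝ) := by
  intro p
  induction p with
  | zero => simp [degFall]
  | succ p ih =>
    rw [Finset.sum_range_succ]
    have h1 : ∀ q ∈ range (p + 1),
        lam ^ (p + 1 - q) * (-1 : ℝ) ^ q * degFall lam q / (q.factorial : ℝ)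
          = lam * (lam ^ (p - q) * (-1 : ℝ) ^ q * degFall lam q / (q.factorial : ℝ)) := by
      intro q hq
      rw [Finset.mem_range] at hq
      rw [(by omega : p + 1 - q = (p - q) + 1), pow_succ]
      ring
    rw [Finset.sum_congr rfl h1, ← Finset.mul_sum, ih, Nat.sub_self, degFall_succ' lam (p + 1),
      Nat.factorial_succ]
    have hfac : ((p.factorial : ℝ)) ≠ 0 := Nat.cast_ne_zero.mpr p.factorial_ne_zero
    have hp1 : ((p : ℝ) + 1) ≠ 0 := by positivity
    push_cast
    field_simp
    ring

lemma dlg_tri2 (M : ℕ) (f : ℕ → ℕ → ℝ) :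
    ∑ u ∈ range (M + 1), ∑ m ∈ range (M - u + 1), f u m
      = ∑ p ∈ range (M + 1), ∑ u ∈ range (p + 1), f u (p - u) := by
  have h := Finset.sum_Ico_Ico_comm 0 (M + 1) (fun u p => f u (p - u))
  simp only [Finset.range_eq_Ico]
  rw [← h]
  refine Finset.sum_congr rfl fun u hu => ?_
  rw [Finset.mem_Ico] at hu
  conv_rhs => rw [Finset.sum_Ico_eq_sum_range]
  rw [(by omega : M + 1 - u = (M - u) + 1)]
  exact Finset.sum_congr (Finset.range_eq_Ico _).symm fun i _ => by
    rw [Nat.add_sub_cancel_left]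

lemma dlg_tri (M : ℕ) (f : ℕ → ℕ → ℝ) :
    ∑ u ∈ range (M + 1), ∑ m ∈ range (M - u + 1), f u m
      = ∑ m ∈ range (M + 1), ∑ u ∈ range (M - m + 1), f u m := by
  rw [dlg_tri2 M f, dlg_tri2 M (fun m u => f u m)]
  refine Finset.sum_congr rfl fun p hp => ?_
  rw [← Finset.sum_range_reflect (fun u => f u (p - u)) (p + 1)]
  refine Finset.sum_congr rfl fun j hj => ?_
  rw [Finset.mem_range] at hj
  rw [(by omega : p + 1 - 1 - j = p - j), (by omega : p - (p - j) = j)]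

lemma degFall_sum' (lam : ℝ) (p : ℕ) :
    ∑ l ∈ range (p + 1),
        lam ^ l * (-1 : ℝ) ^ (p - l) * degFall lam (p - l) / ((p - l).factorial : ℝ)
      = (-1 : ℝ) ^ p * degFall lam (p + 1) / (p.factorial : ℝ) := by
  rw [← degFall_sum lam p,
    ← Finset.sum_range_reflect
      (fun q => lam ^ (p - q) * (-1 : ℝ) ^ q * degFall lam q / (q.factorial : ℝ)) (p + 1)]
  refine Finset.sum_congr rfl fun j hj => ?_
  rw [Finset.mem_range] at hj
  rw [(by omega : p + 1 - 1 - j = p - j), (by omega : p - (p - j) = j)]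

lemma degLaguerre_hasDerivAt (lam α : ℝ) (n : ℕ) (x : ℝ) :
    HasDerivAt (degLaguerre lam α n)
      (∑ m ∈ Finset.range (n + 1),
        genBinom α n m * (-1 : ℝ) ^ m * degFall lam m * ((m : ℝ) * x ^ (m - 1)) /
          (Nat.factorial m : ℝ)) x := by
  have he : degLaguerre lam α n = fun y => ∑ m ∈ Finset.range (n + 1),
      genBinom α n m * (-1 : ℝ) ^ m * degFall lam m * y ^ m / (Nat.factorial m : ℝ) := rfl
  rw [he]
  exact HasDerivAt.fun_sum fun m _ =>
    ((hasDerivAt_pow m x).const_mul (genBinom α n m * (-1 : ℝ) ^ m * degFall lam m)).div_const _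

lemma deriv_degLaguerre (lam α : ℝ) (n : ℕ) (x : ℝ) :
    deriv (degLaguerre lam α n) x
      = ∑ p ∈ Finset.range n,
          genBinom α n (p + 1) * (-1 : ℝ) ^ (p + 1) * degFall lam (p + 1) * x ^ p /
            (Nat.factorial p : ℝ) := by
  rw [(degLaguerre_hasDerivAt lam α n x).deriv, Finset.sum_range_succ']
  simp only [Nat.cast_zero, zero_mul, mul_zero, zero_div, add_zero]
  refine Finset.sum_congr rfl fun p _ => ?_
  rw [Nat.factorial_succ, Nat.add_sub_cancel]
  have hfac : ((p.factorial : ℝ)) ≠ 0 := Nat.cast_ne_zero.mpr p.factorial_ne_zero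
  have hp1 : ((p : ℝ) + 1) ≠ 0 := by positivity
  push_cast
  field_simp

lemma dlg_swap (n : ℕ) (F : ℕ → ℕ → ℝ) :
    ∑ k ∈ Finset.Icc 1 n, ∑ l ∈ Finset.Icc 1 k, F l k
      = ∑ l ∈ Finset.Icc 1 n, ∑ k ∈ Finset.Icc l n, F l k := by
  simp only [← Finset.Ico_add_one_right_eq_Icc]
  exact (Finset.sum_Ico_Ico_comm 1 (n + 1) F).symm

/-- Corollary 7, second identity:
`(d/dx) L^{(α)}_{n,λ}(x) = −∑_{k=1}^n ∑_{l=1}^k x^{l−1} λ^{l−1} C(k−1,k−l) L^{(α)}_{n−k,λ}(x)`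
for `n ≥ 1`. -/
theorem degLaguerre_deriv_sum (lam α : ℝ) (n : ℕ) (hn : 1 ≤ n) (x : ℝ) :
    deriv (degLaguerre lam α n) x =
      -∑ k ∈ Finset.Icc 1 n, ∑ l ∈ Finset.Icc 1 k,
        x ^ (l - 1) * lam ^ (l - 1) * (Nat.choose (k - 1) (k - l) : ℝ) *
          degLaguerre lam α (n - k) x := by
  have hR :
      (∑ k ∈ Finset.Icc 1 n, ∑ l ∈ Finset.Icc 1 k,
        x ^ (l - 1) * lam ^ (l - 1) * (Nat.choose (k - 1) (k - l) : ℝ) *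
          degLaguerre lam α (n - k) x)
      = ∑ p ∈ Finset.range n, x ^ p * gb (α + p + 1) (n - p - 1) *
          ((-1 : ℝ) ^ p * degFall lam (p + 1) / (p.factorial : ℝ)) := by
    calc
      _ = ∑ k ∈ Finset.Icc 1 n, ∑ l ∈ Finset.Icc 1 k, ∑ m ∈ Finset.range (n - k + 1),
            x ^ (l - 1) * lam ^ (l - 1) * (Nat.choose (k - 1) (k - l) : ℝ) *
              (genBinom α (n - k) m * (-1 : ℝ) ^ m * degFall lam m * x ^ m /
                (Nat.factorial m : ℝ)) := by
          refine Finset.sum_congr rfl fun k _ => Finset.sum_congr rfl fun l _ => ?_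
          rw [show degLaguerre lam α (n - k) x = ∑ m ∈ Finset.range (n - k + 1),
            genBinom α (n - k) m * (-1 : ℝ) ^ m * degFall lam m * x ^ m /
              (Nat.factorial m : ℝ) from rfl, Finset.mul_sum]
      _ = ∑ l ∈ Finset.Icc 1 n, ∑ k ∈ Finset.Icc l n, ∑ m ∈ Finset.range (n - k + 1),
            x ^ (l - 1) * lam ^ (l - 1) * (Nat.choose (k - 1) (k - l) : ℝ) *
              (genBinom α (n - k) m * (-1 : ℝ) ^ m * degFall lam m * x ^ m /
                (Nat.factorial m : ℝ)) :=
          dlg_swap n (fun l k => ∑ m ∈ Finset.range (n - k + 1),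
            x ^ (l - 1) * lam ^ (l - 1) * (Nat.choose (k - 1) (k - l) : ℝ) *
              (genBinom α (n - k) m * (-1 : ℝ) ^ m * degFall lam m * x ^ m /
                (Nat.factorial m : ℝ)))
      _ = ∑ l ∈ Finset.Icc 1 n, ∑ u ∈ Finset.range (n - l + 1),
            ∑ m ∈ Finset.range (n - l - u + 1),
            x ^ (l - 1) * lam ^ (l - 1) * (Nat.choose (l - 1 + u) u : ℝ) *
              (genBinom α (n - l - u) m * (-1 : ℝ) ^ m * degFall lam m * x ^ m /
                (Nat.factorial m : ℝ)) := by
          refine Finset.sum_congr rfl fun l hl => ?_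
          rw [Finset.mem_Icc] at hl
          rw [← Finset.Ico_add_one_right_eq_Icc, Finset.sum_Ico_eq_sum_range,
            (by omega : n + 1 - l = n - l + 1)]
          refine Finset.sum_congr rfl fun u hu => ?_
          rw [Finset.mem_range] at hu
          rw [(by omega : l + u - 1 = l - 1 + u), (by omega : l + u - l = u),
            (by omega : n - (l + u) = n - l - u)]
      _ = ∑ l ∈ Finset.Icc 1 n, ∑ m ∈ Finset.range (n - l + 1),
            ∑ u ∈ Finset.range (n - l - m + 1),
            x ^ (l - 1) * lam ^ (l - 1) * (Nat.choose (l - 1 + u) u : ℝ) *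
              (genBinom α (n - l - u) m * (-1 : ℝ) ^ m * degFall lam m * x ^ m /
                (Nat.factorial m : ℝ)) :=
          Finset.sum_congr rfl fun l _ =>
            dlg_tri (n - l) (fun u m =>
              x ^ (l - 1) * lam ^ (l - 1) * (Nat.choose (l - 1 + u) u : ℝ) *
                (genBinom α (n - l - u) m * (-1 : ℝ) ^ m * degFall lam m * x ^ m /
                  (Nat.factorial m : ℝ)))
      _ = ∑ l ∈ Finset.Icc 1 n, ∑ m ∈ Finset.range (n - l + 1),
            x ^ (l - 1) * lam ^ (l - 1) *
              ((-1 : ℝ) ^ m * degFall lam m * x ^ m / (Nat.factorial m : ℝ)) *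
              gb (α + m + l) (n - l - m) := by
          refine Finset.sum_congr rfl fun l hl => Finset.sum_congr rfl fun m hm => ?_
          rw [Finset.mem_Icc] at hl
          rw [Finset.mem_range] at hm
          have h1 : ∀ u ∈ Finset.range (n - l - m + 1),
              x ^ (l - 1) * lam ^ (l - 1) * (Nat.choose (l - 1 + u) u : ℝ) *
                (genBinom α (n - l - u) m * (-1 : ℝ) ^ m * degFall lam m * x ^ m /
                  (Nat.factorial m : ℝ))
              = (x ^ (l - 1) * lam ^ (l - 1) *
                  ((-1 : ℝ) ^ m * degFall lam m * x ^ m / (Nat.factorial m : ℝ))) *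
                ((Nat.choose (l - 1 + u) u : ℝ) * genBinom α (n - l - u) m) :=
            fun u _ => by ring
          rw [Finset.sum_congr rfl h1, ← Finset.mul_sum,
            dlg_inner_sum α n l m hl.1 (by omega)]
      _ = ∑ i ∈ Finset.range n, ∑ m ∈ Finset.range (n - 1 - i + 1),
            x ^ i * lam ^ i *
              ((-1 : ℝ) ^ m * degFall lam m * x ^ m / (Nat.factorial m : ℝ)) *
              gb (α + m + ((i : ℝ) + 1)) (n - 1 - i - m) := by
          rw [← Finset.Ico_add_one_right_eq_Icc, Finset.sum_Ico_eq_sum_range, Nat.add_sub_cancel]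
          refine Finset.sum_congr rfl fun i hi => ?_
          rw [Finset.mem_range] at hi
          rw [(by omega : 1 + i - 1 = i), (by omega : n - (1 + i) = n - 1 - i),
            (show ((1 + i : ℕ) : ℝ) = (i : ℝ) + 1 by push_cast; ring)]
      _ = ∑ p ∈ Finset.range n, ∑ i ∈ Finset.range (p + 1),
            x ^ i * lam ^ i *
              ((-1 : ℝ) ^ (p - i) * degFall lam (p - i) * x ^ (p - i) /
                (Nat.factorial (p - i) : ℝ)) *
              gb (α + ((p - i : ℕ) : ℝ) + ((i : ℝ) + 1)) (n - 1 - i - (p - i)) := by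
          have h := dlg_tri2 (n - 1) (fun i m =>
            x ^ i * lam ^ i *
              ((-1 : ℝ) ^ m * degFall lam m * x ^ m / (Nat.factorial m : ℝ)) *
              gb (α + m + ((i : ℝ) + 1)) (n - 1 - i - m))
          rw [(by omega : n - 1 + 1 = n)] at h
          exact h
      _ = ∑ p ∈ Finset.range n, x ^ p * gb (α + p + 1) (n - p - 1) *
            ((-1 : ℝ) ^ p * degFall lam (p + 1) / (p.factorial : ℝ)) := by
          refine Finset.sum_congr rfl fun p hp => ?_
          rw [Finset.mem_range] at hp
          have hstep : ∀ i ∈ Finset.range (p + 1),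
              x ^ i * lam ^ i *
                ((-1 : ℝ) ^ (p - i) * degFall lam (p - i) * x ^ (p - i) /
                  (Nat.factorial (p - i) : ℝ)) *
                gb (α + ((p - i : ℕ) : ℝ) + ((i : ℝ) + 1)) (n - 1 - i - (p - i))
              = x ^ p * gb (α + p + 1) (n - p - 1) *
                (lam ^ i * (-1 : ℝ) ^ (p - i) * degFall lam (p - i) /
                  (Nat.factorial (p - i) : ℝ)) := by
            intro i hi
            rw [Finset.mem_range] at hi
            rw [(show α + ((p - i : ℕ) : ℝ) + ((i : ℝ) + 1) = α + (p : ℝ) + 1 by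
                  rw [Nat.cast_sub (by omega)]; ring),
              (by omega : n - 1 - i - (p - i) = n - p - 1)]
            have hx : x ^ i * x ^ (p - i) = x ^ p := by
              rw [← pow_add]; congr 1; omega
            linear_combination (lam ^ i * (-1 : ℝ) ^ (p - i) * degFall lam (p - i) *
              gb (α + (p : ℝ) + 1) (n - p - 1) / (Nat.factorial (p - i) : ℝ)) * hx
          rw [Finset.sum_congr rfl hstep, ← Finset.mul_sum, degFall_sum' lam p]
  rw [deriv_degLaguerre, hR, ← Finset.sum_neg_distrib]
  refine Finset.sum_congr rfl fun p hp => ?_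
  rw [Finset.mem_range] at hp
  rw [genBinom_eq_gb α (by omega : p + 1 ≤ n), (by omega : n - (p + 1) = n - p - 1),
    (show α + ((p + 1 : ℕ) : ℝ) = α + (p : ℝ) + 1 by push_cast; ring)]
  ring
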